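/- Let X be a Banach space and suppose (h₁,…,h_M, g₁,…,g_M) is a hypercyclic vector for the 2M-fold direct sum ⊕_{i=1}^{2M} T of a bounded operator T on X. Then for any positive integers k₁,…,k_M, the vector (T^{k₁}h₁,…,T^{k_M}h_M, g₁,…,g_M) is also a hypercyclic vector for ⊕_{i=1}^{2M} T. -/
import Mathlib

/-- If `(h₁,…,h_M,g₁,…,g_M)` is hypercyclic for the `2M`-fold direct sum of `T`,
then so is `(T^{k₁}h₁,…,T^{k_M}h_M,g₁,…,g_M)` for any positive integers `k i`. -/
theorem stmt12 {X : Type*} [NormedAddCommGroup X] [NormedSpace ℝ X] [CompleteSpace X]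
    (T : X →L[ℝ] X) {M : ℕ} (h g : Fin M → X)
    (hd : Dense (Set.range fun n : ℕ =>
      ((fun i : Fin M => (T ^ n) (h i)), (fun i : Fin M => (T ^ n) (g i))))) :
    ∀ k : Fin M → ℕ, (∀ i, 0 < k i) →
      Dense (Set.range fun n : ℕ =>
        ((fun i : Fin M => (T ^ n) ((T ^ (k i)) (h i))),
         (fun i : Fin M => (T ^ n) (g i)))) := by
  intro k _
  rcases subsingleton_or_nontrivial X with hX | hX
  · -- trivial space: everything is dense
    intro x
    have : x = ((fun i : Fin M => (T ^ 0) ((T ^ (k i)) (h i))),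
        (fun i : Fin M => (T ^ 0) (g i))) := Subsingleton.elim _ _
    exact this ▸ subset_closure (Set.mem_range_self 0)
  -- T has dense range (provided M > 0, which holds whenever we have some i : Fin M)
  have hT : ∀ _ : Fin M, DenseRange (⇑T) := by
    intro i
    -- the orbit of h i under T is dense
    have horb : DenseRange fun n : ℕ => (T ^ n) (h i) := by
      have hc : Continuous fun p : (Fin M → X) × (Fin M → X) => p.1 i :=
        (continuous_apply i).comp continuous_fst
      have hs : Function.Surjective fun p : (Fin M → X) × (Fin M → X) => p.1 i :=
        fun x => ⟨⟨fun _ => x, fun _ => x⟩, rfl⟩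
      exact hs.denseRange.comp hd hc
    -- removing the first point keeps it dense
    have htail : Dense (Set.range fun n : ℕ => (T ^ (n + 1)) (h i)) := by
      refine (horb.diff_singleton (h i)).mono ?_
      rintro x ⟨⟨n, rfl⟩, hx⟩
      rcases n with _ | m
      · exact absurd (by simp) hx
      · exact ⟨m, rfl⟩
    refine htail.mono ?_
    rintro x ⟨n, rfl⟩
    refine ⟨(T ^ n) (h i), ?_⟩
    show T ((T ^ n) (h i)) = (T ^ (n + 1)) (h i)
    rw [pow_succ', ContinuousLinearMap.mul_apply]
  -- hence all powers of T have dense range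
  have hTk : ∀ m : ℕ, ∀ _ : Fin M, DenseRange (⇑(T ^ m)) := by
    intro m i
    induction m with
    | zero => simpa using Function.Surjective.denseRange (f := (id : X → X)) (fun x => ⟨x, rfl⟩)
    | succ m ih =>
      have : (⇑(T ^ (m + 1)) : X → X) = ⇑(T ^ m) ∘ ⇑T := by
        ext x; rw [pow_succ, ContinuousLinearMap.mul_apply]; rfl
      rw [this]
      exact ih.comp (hT i) (T ^ m).continuous
  -- the map applying T^(k i) to the first components
  set A : (Fin M → X) × (Fin M → X) → (Fin M → X) × (Fin M → X) :=
    Prod.map (Pi.map fun i => ⇑(T ^ (k i))) id with hA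
  have hAc : Continuous A :=
    (Continuous.piMap fun i => (T ^ (k i)).continuous).prodMap continuous_id
  have hAd : DenseRange A := by
    apply DenseRange.prodMap
    · rw [DenseRange, Set.range_piMap]
      exact dense_pi Set.univ fun i _ => hTk (k i) i
    · exact Function.Surjective.denseRange (fun x => ⟨x, rfl⟩)
  have key : (fun n : ℕ =>
      ((fun i : Fin M => (T ^ n) ((T ^ (k i)) (h i))),
       (fun i : Fin M => (T ^ n) (g i))))
      = A ∘ (fun n : ℕ =>
      ((fun i : Fin M => (T ^ n) (h i)), (fun i : Fin M => (T ^ n) (g i)))) := by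
    funext n
    simp only [hA, Function.comp_apply, Prod.map, Pi.map, id]
    refine Prod.ext ?_ rfl
    funext i
    show (T ^ n) ((T ^ k i) (h i)) = Pi.map (fun i => ⇑(T ^ k i)) (fun i => (T ^ n) (h i)) i
    rw [Pi.map_apply, ← ContinuousLinearMap.mul_apply, ← pow_add, add_comm, pow_add,
      ContinuousLinearMap.mul_apply]
  rw [key, Set.range_comp]
  exact hAd.dense_image hAc hd
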